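/- Let d ≥ 2, 0 < β ≤ 1, Q > 0, and K ≥ 1. Define φ_K(x) = ∑_{j=1}^K 2 a_j^x 3^{-d(j-1)} for x with fixed binary digits (a_j^x). If |f(x) − f(y)| ≤ Q ‖x − y‖_∞^β for all x, y ∈ [0,1]^d, then there exists a function g: C → ℝ with |g(x) − g(y)| ≤ 2^β Q |x−y|^{β log 2/(d log 3)} on C and such that |f(x) − g(∑_{p=1}^d 3^{-p} φ_K(x_p))| ≤ Q · 2^{-β(K−4)} for all x = (x_1,...,x_d) ∈ [0,1]^d. -/

import Mathlib

open Set Filter Topology MeasureTheory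

noncomputable section

/-- The unit cube `[0,1]^d`. -/
def cube (d : ℕ) : Set (Fin d → ℝ) := {x | ∀ p, x p ∈ Set.Icc (0:ℝ) 1}

/-- The Cantor middle-thirds set: reals admitting a ternary expansion with digits in `{0,2}`. -/
def CantorSet : Set ℝ :=
  {y | ∃ t : ℕ → ℕ, (∀ j, t j = 0 ∨ t j = 2) ∧ y = ∑' j : ℕ, (t j : ℝ) / 3 ^ (j + 1)}

/-- `a` assigns to each `x ∈ [0,1]` a fixed binary expansion (`a x j` is the digit `a_{j+1}^x`). -/
def IsBinaryExp (a : ℝ → ℕ → ℕ) : Prop :=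
  ∀ x ∈ Set.Icc (0:ℝ) 1, (∀ j, a x j ≤ 1) ∧ x = ∑' j : ℕ, (a x j : ℝ) / 2 ^ (j + 1)

/-- `φ(x) = ∑_{j≥1} 2 a_j^x 3^{-d(j-1)}`. -/
def phiFun (d : ℕ) (a : ℝ → ℕ → ℕ) (x : ℝ) : ℝ := ∑' j : ℕ, (2 * a x j : ℝ) / 3 ^ (d * j)

/-- `Φ(x_1,…,x_d) = ∑_{p=1}^d 3^{-p} φ(x_p)`. -/
def PhiFun (d : ℕ) (a : ℝ → ℕ → ℕ) (x : Fin d → ℝ) : ℝ :=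
  ∑ p : Fin d, phiFun d a (x p) / 3 ^ ((p : ℕ) + 1)

/-- The truncated interior function `φ_K(x) = ∑_{j=1}^K 2 a_j^x 3^{-d(j-1)}`. -/
def phiTrunc (d K : ℕ) (a : ℝ → ℕ → ℕ) (x : ℝ) : ℝ :=
  ∑ j ∈ Finset.range K, (2 * a x j : ℝ) / 3 ^ (d * j)

lemma real_rpow_add_le {x y p : ℝ} (hx : 0 ≤ x) (hy : 0 ≤ y) (hp : 0 ≤ p) (hp1 : p ≤ 1) :
    (x + y) ^ p ≤ x ^ p + y ^ p := by
  have h := NNReal.rpow_add_le_add_rpow (⟨x, hx⟩ : NNReal) ⟨y, hy⟩ hp hp1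
  have := NNReal.coe_le_coe.mpr h
  push_cast [NNReal.coe_rpow] at this
  exact this

lemma geom_tail_three (c N : ℕ) : ∑ m ∈ Finset.Ico c N, (2:ℝ)/3^(m+1) ≤ 1/3^c := by
  rw [Finset.sum_Ico_eq_sum_range]
  have hc : ∀ i : ℕ, (2:ℝ)/3^(c+i+1) = (2/3^(c+1)) * (1/3)^i := by
    intro i; rw [pow_add, pow_add, one_div_pow]; ring
  have hs : Summable (fun i : ℕ => (2:ℝ)/3^(c+i+1)) :=
    ((summable_geometric_of_lt_one (by norm_num) (by norm_num)).mul_left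
      ((2:ℝ)/3^(c+1))).congr fun i => (hc i).symm
  have hsum : ∑' i : ℕ, (2:ℝ)/3^(c+i+1) = 1/3^c := by
    rw [tsum_congr hc, tsum_mul_left, tsum_geometric_of_lt_one (by norm_num) (by norm_num)]
    rw [pow_add]; ring
  calc ∑ i ∈ Finset.range (N - c), (2:ℝ)/3^(c+i+1)
      ≤ ∑' i : ℕ, (2:ℝ)/3^(c+i+1) := Summable.sum_le_tsum _ (fun i _ => by positivity) hs
    _ = 1/3^c := hsum

lemma binary_close (A B : ℕ → ℕ) (hA : ∀ j, A j ≤ 1) (hB : ∀ j, B j ≤ 1)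
    (J : ℕ) (hagree : ∀ j < J, A j = B j) :
    |(∑' j : ℕ, (A j : ℝ) / 2 ^ (j + 1)) - ∑' j : ℕ, (B j : ℝ) / 2 ^ (j + 1)| ≤ 1 / 2 ^ J := by
  have hgeo : Summable (fun j : ℕ => (1:ℝ)/2^(j+1)) := by
    have : ∀ j : ℕ, (1:ℝ)/2^(j+1) = (1/2) * (1/2)^j := by intro j; rw [pow_succ, one_div_pow]; ring
    exact ((summable_geometric_of_lt_one (by norm_num) (by norm_num)).mul_left _).congr
      fun i => (this i).symm
  have hsA : Summable (fun j : ℕ => (A j : ℝ)/2^(j+1)) := by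
    apply Summable.of_nonneg_of_le (fun j => by positivity) _ hgeo
    intro j
    have : (A j : ℝ) ≤ 1 := by exact_mod_cast hA j
    gcongr
  have hsB : Summable (fun j : ℕ => (B j : ℝ)/2^(j+1)) := by
    apply Summable.of_nonneg_of_le (fun j => by positivity) _ hgeo
    intro j
    have : (B j : ℝ) ≤ 1 := by exact_mod_cast hB j
    gcongr
  have hdiff : (∑' j : ℕ, (A j : ℝ) / 2 ^ (j + 1)) - ∑' j : ℕ, (B j : ℝ) / 2 ^ (j + 1)
      = ∑' j : ℕ, ((A j : ℝ) - B j) / 2 ^ (j + 1) := by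
    rw [← Summable.tsum_sub hsA hsB]; congr 1; ext j; ring
  have hsD : Summable (fun j : ℕ => ((A j : ℝ) - B j)/2^(j+1)) := by
    have := hsA.sub hsB
    apply this.congr; intro j; ring
  rw [hdiff]
  have hsplit := Summable.sum_add_tsum_nat_add (f := fun j : ℕ => ((A j : ℝ) - B j)/2^(j+1)) J hsD
  have hzero : ∑ j ∈ Finset.range J, ((A j : ℝ) - B j)/2^(j+1) = 0 := by
    apply Finset.sum_eq_zero; intro j hj
    rw [hagree j (Finset.mem_range.mp hj)]; ring
  rw [← hsplit, hzero, zero_add]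
  have hb : ∀ i : ℕ, |((A (i+J) : ℝ) - B (i+J))/2^(i+J+1)| ≤ (1/2^(J+1)) * (1/2)^i := by
    intro i
    rw [abs_div, abs_of_nonneg (by positivity : (0:ℝ) ≤ 2^(i+J+1))]
    have h1 : |(A (i+J) : ℝ) - B (i+J)| ≤ 1 := by
      rw [abs_sub_le_iff]
      constructor <;>
      · have h1 : (A (i+J) : ℝ) ≤ 1 := by exact_mod_cast hA (i+J)
        have h2 : (0:ℝ) ≤ (B (i+J) : ℝ) := by positivity
        have h3 : (B (i+J) : ℝ) ≤ 1 := by exact_mod_cast hB (i+J)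
        have h4 : (0:ℝ) ≤ (A (i+J) : ℝ) := by positivity
        linarith
    calc |(A (i+J) : ℝ) - B (i+J)| / 2^(i+J+1) ≤ 1 / 2^(i+J+1) := by gcongr
      _ = (1/2^(J+1)) * (1/2)^i := by rw [pow_add, pow_add, pow_add, one_div_pow]; ring
  have hgsum : HasSum (fun i : ℕ => (1/2^(J+1)) * (1/2:ℝ)^i) (1/2^J) := by
    have := (hasSum_geometric_of_lt_one (by norm_num : (0:ℝ) ≤ 1/2) (by norm_num)).mul_left
      ((1:ℝ)/2^(J+1))
    convert this using 1
    · rfl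
    rw [pow_succ]; norm_num; ring
  have habs : ‖∑' i : ℕ, ((A (i+J) : ℝ) - B (i+J))/2^(i+J+1)‖ ≤ 1/2^J :=
    tsum_of_norm_bounded hgsum (fun i => by rw [Real.norm_eq_abs]; exact hb i)
  rw [Real.norm_eq_abs] at habs
  exact habs

lemma ternary_sep (t s : ℕ → ℝ) (N n : ℕ) (hn : n < N)
    (ht : ∀ m, 0 ≤ t m ∧ t m ≤ 2) (hs : ∀ m, 0 ≤ s m ∧ s m ≤ 2)
    (hagree : ∀ m < n, t m = s m) (hdiff : |t n - s n| = 2) :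
    1/3^(n+1) ≤ |(∑ m ∈ Finset.range N, t m / 3^(m+1)) - ∑ m ∈ Finset.range N, s m / 3^(m+1)| := by
  have hD : (∑ m ∈ Finset.range N, t m / 3^(m+1)) - ∑ m ∈ Finset.range N, s m / 3^(m+1)
      = ∑ m ∈ Finset.range N, (t m - s m) / 3^(m+1) := by
    rw [← Finset.sum_sub_distrib]; congr 1; ext m; ring
  rw [hD]
  have hsplit : ∑ m ∈ Finset.range N, (t m - s m) / 3^(m+1)
      = (t n - s n)/3^(n+1) + ∑ m ∈ Finset.Ico (n+1) N, (t m - s m) / 3^(m+1) := by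
    rw [Finset.range_eq_Ico, ← Finset.sum_Ico_consecutive _ (Nat.zero_le n) hn.le,
        ← Finset.sum_Ico_consecutive _ (Nat.le_succ n) hn]
    have h0 : ∑ m ∈ Finset.Ico 0 n, (t m - s m) / 3^(m+1) = 0 :=
      Finset.sum_eq_zero fun m hm => by
        rw [hagree m (Finset.mem_Ico.mp hm).2]; ring
    rw [h0, zero_add, Finset.sum_Ico_eq_sum_range]
    simp
  rw [hsplit]
  have htail : |∑ m ∈ Finset.Ico (n+1) N, (t m - s m) / 3^(m+1)| ≤ 1/3^(n+1) := by
    calc |∑ m ∈ Finset.Ico (n+1) N, (t m - s m) / 3^(m+1)|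
        ≤ ∑ m ∈ Finset.Ico (n+1) N, |(t m - s m) / 3^(m+1)| := Finset.abs_sum_le_sum_abs _ _
      _ ≤ ∑ m ∈ Finset.Ico (n+1) N, (2:ℝ)/3^(m+1) := by
          apply Finset.sum_le_sum; intro m _
          rw [abs_div, abs_of_nonneg (by positivity : (0:ℝ) ≤ 3^(m+1))]
          have h1 := (ht m).1; have h2 := (ht m).2
          have h3 := (hs m).1; have h4 := (hs m).2
          have : |t m - s m| ≤ 2 := by rw [abs_sub_le_iff]; constructor <;> linarith
          gcongr
      _ ≤ 1/3^(n+1) := geom_tail_three _ _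
  have hmain : |(t n - s n)/3^(n+1)| = 2/3^(n+1) := by
    rw [abs_div, hdiff, abs_of_nonneg (by positivity : (0:ℝ) ≤ 3^(n+1))]
  calc (1:ℝ)/3^(n+1) = 2/3^(n+1) - 1/3^(n+1) := by ring
    _ ≤ |(t n - s n)/3^(n+1)| - |∑ m ∈ Finset.Ico (n+1) N, (t m - s m) / 3^(m+1)| := by
        rw [hmain]; linarith
    _ ≤ |(t n - s n)/3^(n+1) + ∑ m ∈ Finset.Ico (n+1) N, (t m - s m) / 3^(m+1)| := by
        have := abs_add_le ((t n - s n)/3^(n+1) + ∑ m ∈ Finset.Ico (n+1) N, (t m - s m) / 3^(m+1))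
          (-(∑ m ∈ Finset.Ico (n+1) N, (t m - s m) / 3^(m+1)))
        simp at this
        linarith

lemma reindexPhi (d K : ℕ) (hd : 0 < d) (a : ℝ → ℕ → ℕ) (x : Fin d → ℝ) :
    ∑ p : Fin d, phiTrunc d K a (x p) / 3 ^ ((p : ℕ) + 1)
      = ∑ m ∈ Finset.range (d * K),
          (2 * a (x ⟨m % d, Nat.mod_lt m hd⟩) (m / d) : ℝ) / 3 ^ (m + 1) := by
  have step1 : ∀ p : Fin d, phiTrunc d K a (x p) / 3 ^ ((p : ℕ) + 1)
      = ∑ j ∈ Finset.range K, (2 * a (x p) j : ℝ) / 3 ^ (d * j + ((p : ℕ) + 1)) := by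
    intro p
    rw [phiTrunc, Finset.sum_div]
    congr 1; ext j
    rw [div_div, ← pow_add]
  simp only [step1]
  rw [← Finset.sum_product']
  refine Finset.sum_bij' (fun pj _ => d * pj.2 + (pj.1 : ℕ))
    (fun m hm => (⟨m % d, Nat.mod_lt m hd⟩, m / d)) ?_ ?_ ?_ ?_ ?_
  · rintro ⟨p, j⟩ h
    simp only [Finset.mem_product, Finset.mem_univ, Finset.mem_range, true_and] at h ⊢
    have hp : (p : ℕ) < d := p.2
    calc d * j + (p : ℕ) < d * j + d := by omega
      _ ≤ d * K := by rw [← Nat.mul_succ]; exact Nat.mul_le_mul_left d h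
  · intro m hm
    simp only [Finset.mem_product, Finset.mem_univ, Finset.mem_range, true_and] at hm ⊢
    exact Nat.div_lt_of_lt_mul (by omega)
  · rintro ⟨p, j⟩ h
    have hp : (p : ℕ) < d := p.2
    have h1 : (d * j + (p : ℕ)) % d = (p : ℕ) := by
      rw [add_comm, Nat.add_mul_mod_self_left, Nat.mod_eq_of_lt hp]
    have h2 : (d * j + (p : ℕ)) / d = j := by
      rw [add_comm, Nat.add_mul_div_left _ _ hd, Nat.div_eq_of_lt hp, zero_add]
    simp only [Prod.mk.injEq]
    exact ⟨Fin.ext h1, h2⟩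
  · intro m hm
    exact Nat.div_add_mod m d
  · rintro ⟨p, j⟩ h
    have hp : (p : ℕ) < d := p.2
    have h1 : (d * j + (p : ℕ)) % d = (p : ℕ) := by
      rw [add_comm, Nat.add_mul_mod_self_left, Nat.mod_eq_of_lt hp]
    have h2 : (d * j + (p : ℕ)) / d = j := by
      rw [add_comm, Nat.add_mul_div_left _ _ hd, Nat.div_eq_of_lt hp, zero_add]
    have hx : x ⟨(d * j + (p : ℕ)) % d, Nat.mod_lt _ hd⟩ = x p := by
      congr 1; exact Fin.ext h1
    simp only [hx, h2]
    rw [add_assoc]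

/-- Let `d ≥ 2`, `0 < β ≤ 1`, `Q > 0`, `K ≥ 1`. If `f` is `(Q,β)`-Hölder on
`[0,1]^d` (sup-norm), then there is `g : C → ℝ` with
`|g(x) − g(y)| ≤ 2^β Q |x−y|^{β log 2/(d log 3)}` on the Cantor set `C` and
`|f(x) − g(∑_{p=1}^d 3^{-p} φ_K(x_p))| ≤ Q 2^{-β(K−4)}` for all `x ∈ [0,1]^d`. -/
theorem stmt12 (d K : ℕ) (hd : 2 ≤ d) (hK : 1 ≤ K) (β Q : ℝ)
    (hβ0 : 0 < β) (hβ1 : β ≤ 1) (hQ : 0 < Q)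
    (a : ℝ → ℕ → ℕ) (ha : IsBinaryExp a) (f : (Fin d → ℝ) → ℝ)
    (hf : ∀ x ∈ cube d, ∀ y ∈ cube d, |f x - f y| ≤ Q * ‖x - y‖ ^ β) :
    ∃ g : ℝ → ℝ,
      (∀ u ∈ CantorSet, ∀ v ∈ CantorSet,
        |g u - g v| ≤ 2 ^ β * Q * |u - v| ^ (β * Real.log 2 / (d * Real.log 3))) ∧
      ∀ x ∈ cube d,
        |f x - g (∑ p : Fin d, phiTrunc d K a (x p) / 3 ^ ((p : ℕ) + 1))|
          ≤ Q * 2 ^ (-(β * ((K : ℝ) - 4))) := by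
  classical
  have hd0 : 0 < d := by omega
  have hd0' : (0:ℝ) < d := by exact_mod_cast hd0
  have hlog2 : 0 < Real.log 2 := Real.log_pos (by norm_num)
  have hlog3 : 0 < Real.log 3 := Real.log_pos (by norm_num)
  set c : ℝ := Real.log 2 / ((d:ℝ) * Real.log 3) with hc_def
  have hc0 : 0 < c := div_pos hlog2 (by positivity)
  have hc1 : c ≤ 1 := by
    rw [hc_def, div_le_one (by positivity)]
    calc Real.log 2 ≤ Real.log 3 := Real.log_le_log (by norm_num) (by norm_num)
      _ = 1 * Real.log 3 := (one_mul _).symm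
      _ ≤ (d:ℝ) * Real.log 3 := by
          apply mul_le_mul_of_nonneg_right _ hlog3.le
          exact_mod_cast (by omega : 1 ≤ d)
  set α : ℝ := β * c with hα_def
  have hα0 : 0 < α := mul_pos hβ0 hc0
  have hα1 : α ≤ 1 := by
    calc α = β * c := hα_def
      _ ≤ 1 * 1 := mul_le_mul hβ1 hc1 hc0.le (by norm_num)
      _ = 1 := one_mul 1
  have hαeq : β * Real.log 2 / ((d:ℝ) * Real.log 3) = α := by
    rw [hα_def, hc_def, mul_div_assoc]
  -- the truncated map
  set ΦK : (Fin d → ℝ) → ℝ :=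
    fun x => ∑ p : Fin d, phiTrunc d K a (x p) / 3 ^ ((p : ℕ) + 1) with hΦK_def
  set dig : (Fin d → ℝ) → ℕ → ℕ :=
    fun x m => 2 * a (x ⟨m % d, Nat.mod_lt m hd0⟩) (m / d) with hdig_def
  have hreidx : ∀ x : Fin d → ℝ,
      ΦK x = ∑ m ∈ Finset.range (d * K), (dig x m : ℝ) / 3 ^ (m + 1) := by
    intro x
    have h0 : ΦK x = ∑ p : Fin d, phiTrunc d K a (x p) / 3 ^ ((p : ℕ) + 1) := rfl
    rw [h0, reindexPhi d K hd0 a x]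
    congr 1; ext m
    rw [hdig_def]; push_cast; ring
  have hdig01 : ∀ x ∈ cube d, ∀ m : ℕ, dig x m = 0 ∨ dig x m = 2 := by
    intro x hx m
    have hmem : x ⟨m % d, Nat.mod_lt m hd0⟩ ∈ Set.Icc (0:ℝ) 1 := hx _
    have h1 := (ha _ hmem).1 (m / d)
    have hdm : dig x m = 2 * a (x ⟨m % d, Nat.mod_lt m hd0⟩) (m / d) := rfl
    omega
  -- digits agree up to d*K implies equal images and closeness
  have hdig_eval : ∀ z : Fin d → ℝ, ∀ p : Fin d, ∀ j : ℕ,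
      dig z (d * j + (p:ℕ)) = 2 * a (z p) j := by
    intro z p j
    have hmod : (d * j + (p:ℕ)) % d = (p:ℕ) := by
      rw [add_comm, Nat.add_mul_mod_self_left, Nat.mod_eq_of_lt p.2]
    have hdiv : (d * j + (p:ℕ)) / d = j := by
      rw [add_comm, Nat.add_mul_div_left _ _ hd0, Nat.div_eq_of_lt p.2, zero_add]
    have h0 : dig z (d * j + (p:ℕ))
        = 2 * a (z ⟨(d * j + (p:ℕ)) % d, Nat.mod_lt _ hd0⟩) ((d * j + (p:ℕ)) / d) := rfl
    have hfin : (⟨(d * j + (p:ℕ)) % d, Nat.mod_lt _ hd0⟩ : Fin d) = p := Fin.ext hmod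
    rw [h0, hdiv, hfin]
  have hposlt : ∀ (p : Fin d), ∀ j, j < K → d * j + (p:ℕ) < d * K := by
    intro p j hj
    have hp : (p:ℕ) < d := p.2
    calc d * j + (p : ℕ) < d * j + d := by omega
      _ ≤ d * K := by rw [← Nat.mul_succ]; exact Nat.mul_le_mul_left d hj
  have hagree_imp : ∀ x ∈ cube d, ∀ y ∈ cube d,
      (∀ m, m < d * K → dig x m = dig y m) →
      ΦK x = ΦK y ∧ ∀ p : Fin d, |x p - y p| ≤ 1 / 2 ^ K := by
    intro x hx y hy hall
    have hbin : ∀ p : Fin d, ∀ j, j < K → a (x p) j = a (y p) j := by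
      intro p j hj
      have hdm := hall _ (hposlt p j hj)
      rw [hdig_eval x p j, hdig_eval y p j] at hdm
      omega
    refine ⟨?_, ?_⟩
    · rw [hreidx x, hreidx y]
      apply Finset.sum_congr rfl
      intro m hm
      rw [hall m (Finset.mem_range.mp hm)]
    · intro p
      have hxe := (ha _ (hx p)).2
      have hye := (ha _ (hy p)).2
      rw [hxe, hye]
      exact binary_close _ _ (ha _ (hx p)).1 (ha _ (hy p)).1 K (fun j hj => hbin p j hj)
  -- digits differ somewhere below d*K: separation and coordinate bound
  have pow3c : ∀ N : ℕ, ((1:ℝ)/3^N) ^ c = (1/2:ℝ) ^ ((N:ℝ)/d) := by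
    intro N
    have h3 : (0:ℝ) < 3 := by norm_num
    have h2 : (0:ℝ) < 2 := by norm_num
    rw [one_div, one_div]
    rw [← Real.rpow_natCast (3:ℝ) N, ← Real.rpow_neg h3.le, ← Real.rpow_mul h3.le]
    rw [← Real.rpow_neg_one (2:ℝ), ← Real.rpow_mul h2.le]
    rw [Real.rpow_def_of_pos h3, Real.rpow_def_of_pos h2]
    congr 1
    rw [hc_def]
    field_simp
  have hdiff_imp : ∀ x ∈ cube d, ∀ y ∈ cube d,
      (¬ ∀ m, m < d * K → dig x m = dig y m) →
      ΦK x ≠ ΦK y ∧ ∀ p : Fin d, |x p - y p| ≤ 2 * |ΦK x - ΦK y| ^ c := by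
    intro x hx y hy hnall
    push_neg at hnall
    obtain ⟨m₀, hm₀lt, hm₀ne⟩ := hnall
    have hPex : ∃ m, dig x m ≠ dig y m ∧ m < d * K := ⟨m₀, hm₀ne, hm₀lt⟩
    set n := Nat.find hPex with hn_def
    obtain ⟨hne_n, hnlt⟩ : dig x n ≠ dig y n ∧ n < d * K := Nat.find_spec hPex
    have hmin : ∀ m, m < n → dig x m = dig y m := by
      intro m hm
      by_contra hcon
      exact Nat.find_min hPex hm ⟨hcon, by omega⟩
    have hsep : 1/3^(n+1) ≤ |ΦK x - ΦK y| := by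
      rw [hreidx x, hreidx y]
      apply ternary_sep (fun m => (dig x m : ℝ)) (fun m => (dig y m : ℝ)) (d*K) n hnlt
      · intro m; rcases hdig01 x hx m with h | h <;> rw [h] <;> norm_num
      · intro m; rcases hdig01 y hy m with h | h <;> rw [h] <;> norm_num
      · intro m hm; rw [hmin m hm]
      · rcases hdig01 x hx n with h1 | h1 <;> rcases hdig01 y hy n with h2 | h2
        · exact absurd (h1.trans h2.symm) hne_n
        · rw [h1, h2]; norm_num
        · rw [h1, h2]; norm_num
        · exact absurd (h1.trans h2.symm) hne_n
    have hΦne : ΦK x ≠ ΦK y := by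
      intro hcon
      rw [hcon, sub_self, abs_zero] at hsep
      have : (0:ℝ) < 1/3^(n+1) := by positivity
      linarith
    refine ⟨hΦne, ?_⟩
    intro p
    set J' := (n - (p:ℕ) + d - 1) / d with hJ'_def
    set J := min K J' with hJ_def
    have hdivf : d * J' ≤ n - (p:ℕ) + d - 1 ∧ n - (p:ℕ) + d - 1 < d * J' + d := by
      have h1 := Nat.div_add_mod (n - (p:ℕ) + d - 1) d
      have h2 := Nat.mod_lt (n - (p:ℕ) + d - 1) hd0
      rw [hJ'_def]
      omega
    have hJ'lt : ∀ j, j < J' → d * j + (p:ℕ) < n := by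
      intro j hj
      have h3 : d * (j+1) ≤ d * J' := Nat.mul_le_mul_left d hj
      have h4 : d * j + d ≤ n - (p:ℕ) + d - 1 := by
        rw [Nat.mul_succ] at h3; exact le_trans h3 hdivf.1
      have hp := p.2
      omega
    -- digits of the p-th coordinates agree below J
    have hbin : ∀ j, j < J → a (x p) j = a (y p) j := by
      intro j hj
      rw [hJ_def, lt_min_iff] at hj
      have hlt_n : d * j + (p:ℕ) < n := hJ'lt j hj.2
      have hdm : dig x (d * j + (p:ℕ)) = dig y (d * j + (p:ℕ)) := hmin _ hlt_n
      rw [hdig_eval x p j, hdig_eval y p j] at hdm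
      omega
    have hclose : |x p - y p| ≤ 1 / 2 ^ J := by
      have hxe := (ha _ (hx p)).2
      have hye := (ha _ (hy p)).2
      rw [hxe, hye]
      exact binary_close _ _ (ha _ (hx p)).1 (ha _ (hy p)).1 J hbin
    -- exponent comparison : n + 1 ≤ d * (J + 1)
    have hJbound : (n:ℕ) + 1 ≤ d * (J + 1) := by
      rcases Nat.le_total K J' with hKJ | hKJ
      · have hJK : J = K := by rw [hJ_def]; exact min_eq_left hKJ
        rw [hJK]
        have : d * K ≤ d * (K + 1) := Nat.mul_le_mul_left d (Nat.le_succ K)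
        omega
      · have hJJ : J = J' := by rw [hJ_def]; exact min_eq_right hKJ
        rw [hJJ]
        have h5 := hdivf.2
        have hp := p.2
        have : d * (J' + 1) = d * J' + d := by rw [Nat.mul_succ]
        omega
    -- real estimates
    have hQc : ((1:ℝ)/3^(n+1)) ^ c ≤ |ΦK x - ΦK y| ^ c :=
      Real.rpow_le_rpow (by positivity) hsep hc0.le
    have hQe : ((1:ℝ)/3^(n+1)) ^ c = (1/2:ℝ) ^ (((n:ℝ)+1)/d) := by
      have := pow3c (n+1)
      push_cast at this
      exact this
    have hhalf : (0:ℝ) < 1/2 := by norm_num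
    have hexp : ((n:ℝ)+1)/d ≤ (J:ℝ) + 1 := by
      rw [div_le_iff₀ hd0']
      have : ((n:ℝ) + 1) ≤ (d:ℝ) * ((J:ℝ) + 1) := by exact_mod_cast hJbound
      linarith [this]
    have hmono : (1/2:ℝ) ^ ((J:ℝ) + 1) ≤ (1/2:ℝ) ^ (((n:ℝ)+1)/d) :=
      Real.rpow_le_rpow_of_exponent_ge hhalf (by norm_num) hexp
    have hsplitpow : (1/2:ℝ) ^ ((J:ℝ) + 1) = (1/2:ℝ) ^ (J:ℕ) * (1/2) := by
      rw [Real.rpow_add hhalf, Real.rpow_one, Real.rpow_natCast]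
    have hfinal : (1:ℝ) / 2 ^ J ≤ 2 * |ΦK x - ΦK y| ^ c := by
      have h6 : (1/2:ℝ) ^ (J:ℕ) = 1 / 2 ^ J := by
        rw [div_pow, one_pow]
      have h7 : (1:ℝ)/2^J = 2 * ((1/2:ℝ)^(J:ℕ) * (1/2)) := by rw [h6]; ring
      calc (1:ℝ)/2^J = 2 * ((1/2:ℝ)^(J:ℕ) * (1/2)) := h7
        _ = 2 * (1/2:ℝ) ^ ((J:ℝ) + 1) := by rw [hsplitpow]
        _ ≤ 2 * (1/2:ℝ) ^ (((n:ℝ)+1)/d) := by linarith [hmono]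
        _ = 2 * ((1:ℝ)/3^(n+1)) ^ c := by rw [hQe]
        _ ≤ 2 * |ΦK x - ΦK y| ^ c := by linarith [hQc]
    exact le_trans hclose hfinal
  -- norm facts
  have hnorm_le : ∀ x y : Fin d → ℝ, (∀ p, |x p - y p| ≤ (1:ℝ)) → ‖x - y‖ ≤ 1 := by
    intro x y h
    rw [pi_norm_le_iff_of_nonneg (by norm_num)]
    intro p
    simpa [Real.norm_eq_abs] using h p
  have hcube1 : ∀ x ∈ cube d, ∀ y ∈ cube d, ‖x - y‖ ≤ 1 := by
    intro x hx y hy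
    apply hnorm_le
    intro p
    have h1 := hx p; have h2 := hy p
    simp only [Set.mem_Icc] at h1 h2
    rw [abs_sub_le_iff]; constructor <;> linarith [h1.1, h1.2, h2.1, h2.2]
  -- Hölder transfer through ΦK
  have hFH : ∀ x ∈ cube d, ∀ y ∈ cube d, ΦK x ≠ ΦK y →
      |f x - f y| ≤ 2 ^ β * Q * |ΦK x - ΦK y| ^ α := by
    intro x hx y hy hne
    have hdigne : ¬ ∀ m, m < d * K → dig x m = dig y m := by
      intro hall; exact hne (hagree_imp x hx y hy hall).1
    have hcoord := (hdiff_imp x hx y hy hdigne).2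
    have hnn : (0:ℝ) ≤ |ΦK x - ΦK y| ^ c := Real.rpow_nonneg (abs_nonneg _) c
    have hnrm : ‖x - y‖ ≤ 2 * |ΦK x - ΦK y| ^ c := by
      rw [pi_norm_le_iff_of_nonneg (by positivity)]
      intro p; simpa [Real.norm_eq_abs] using hcoord p
    have h1 : ‖x - y‖ ^ β ≤ (2 * |ΦK x - ΦK y| ^ c) ^ β :=
      Real.rpow_le_rpow (norm_nonneg _) hnrm hβ0.le
    have h2 : (2 * |ΦK x - ΦK y| ^ c) ^ β = 2 ^ β * |ΦK x - ΦK y| ^ α := by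
      rw [Real.mul_rpow (by norm_num) hnn, ← Real.rpow_mul (abs_nonneg _)]
      congr 1
      rw [hα_def]; ring
    have h2b : (0:ℝ) < 2 ^ β := Real.rpow_pos_of_pos (by norm_num) β
    calc |f x - f y| ≤ Q * ‖x - y‖ ^ β := hf x hx y hy
      _ ≤ Q * (2 ^ β * |ΦK x - ΦK y| ^ α) := by
          rw [← h2]; exact mul_le_mul_of_nonneg_left h1 hQ.le
      _ = 2 ^ β * Q * |ΦK x - ΦK y| ^ α := by ring
  -- the image set and chosen preimages
  set S : Set ℝ := ΦK '' cube d with hS_def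
  have hx₀cube : (fun _ : Fin d => (0:ℝ)) ∈ cube d := by
    intro p; exact ⟨le_refl 0, zero_le_one⟩
  have hSne : S.Nonempty := ⟨ΦK (fun _ => 0), ⟨_, hx₀cube, rfl⟩⟩
  haveI : Nonempty ↥S := hSne.to_subtype
  have hrex : ∀ s : S, ∃ x, x ∈ cube d ∧ ΦK x = (s : ℝ) := by
    rintro ⟨s, x, hx, hxs⟩; exact ⟨x, hx, hxs⟩
  choose r hrc hre using hrex
  set H : ℝ := 2 ^ β * Q with hH_def
  have hH0 : 0 < H := mul_pos (Real.rpow_pos_of_pos (by norm_num) β) hQ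
  -- boundedness of f on the cube
  have hfb : ∀ z ∈ cube d, f (fun _ => 0) - Q ≤ f z := by
    intro z hz
    have := hf z hz _ hx₀cube
    have h1 : ‖z - fun _ => 0‖ ≤ 1 := hcube1 z hz _ hx₀cube
    have h2 : ‖z - fun _ => 0‖ ^ β ≤ 1 := Real.rpow_le_one (norm_nonneg _) h1 hβ0.le
    have h3 : |f z - f (fun _ => 0)| ≤ Q := by
      calc |f z - f (fun _ => 0)| ≤ Q * ‖z - fun _ => 0‖ ^ β := this
        _ ≤ Q * 1 := by nlinarith
        _ = Q := mul_one Q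
    have := abs_le.mp h3
    linarith [this.1]
  set g : ℝ → ℝ := fun u => ⨅ s : S, (f (r s) + H * |u - (s:ℝ)| ^ α) with hg_def
  have hbdd : ∀ u : ℝ, BddBelow (Set.range fun s : S => f (r s) + H * |u - (s:ℝ)| ^ α) := by
    intro u
    refine ⟨f (fun _ => 0) - Q, ?_⟩
    rintro _ ⟨s, rfl⟩
    have h1 : f (fun _ => 0) - Q ≤ f (r s) := hfb _ (hrc s)
    have h2 : 0 ≤ H * |u - (s:ℝ)| ^ α := by positivity
    simp only
    linarith
  -- Hölder property of the data on S
  have P0 : ∀ s t : S, |f (r s) - f (r t)| ≤ H * |(s:ℝ) - (t:ℝ)| ^ α := by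
    intro s t
    by_cases hst : (s:ℝ) = (t:ℝ)
    · have : s = t := Subtype.coe_injective hst
      subst this
      simp only [sub_self, abs_zero]
      positivity
    · have hne : ΦK (r s) ≠ ΦK (r t) := by rw [hre s, hre t]; exact hst
      have := hFH (r s) (hrc s) (r t) (hrc t) hne
      rwa [hre s, hre t] at this
  -- g restricted to S recovers f of the representative
  have P2 : ∀ s : S, g (s:ℝ) = f (r s) := by
    intro s
    apply le_antisymm
    · have := ciInf_le (hbdd (s:ℝ)) s
      simpa [Real.zero_rpow hα0.ne'] using this
    · have h0 : g (s:ℝ) = ⨅ t : S, (f (r t) + H * |(s:ℝ) - (t:ℝ)| ^ α) := rfl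
      rw [h0]
      apply le_ciInf
      intro t
      have h := le_trans (le_abs_self _) (P0 s t)
      linarith
  -- global Hölder property of g
  have P1 : ∀ u v : ℝ, g u ≤ g v + H * |u - v| ^ α := by
    intro u v
    have inner : ∀ s : S, g u - H * |u - v| ^ α ≤ f (r s) + H * |v - (s:ℝ)| ^ α := by
      intro s
      have step : |u - (s:ℝ)| ^ α ≤ |v - (s:ℝ)| ^ α + |u - v| ^ α := by
        have htri : |u - (s:ℝ)| ≤ |u - v| + |v - (s:ℝ)| := abs_sub_le u v s
        calc |u - (s:ℝ)| ^ α ≤ (|u - v| + |v - (s:ℝ)|) ^ α :=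
              Real.rpow_le_rpow (abs_nonneg _) htri hα0.le
          _ ≤ |u - v| ^ α + |v - (s:ℝ)| ^ α :=
              real_rpow_add_le (abs_nonneg _) (abs_nonneg _) hα0.le hα1
          _ = |v - (s:ℝ)| ^ α + |u - v| ^ α := by ring
      have h1 : g u ≤ f (r s) + H * |u - (s:ℝ)| ^ α := ciInf_le (hbdd u) s
      have h2 : H * |u - (s:ℝ)| ^ α ≤ H * |v - (s:ℝ)| ^ α + H * |u - v| ^ α := by
        rw [← mul_add]
        exact mul_le_mul_of_nonneg_left step hH0.le
      linarith
    have h2 : g u - H * |u - v| ^ α ≤ ⨅ s : S, (f (r s) + H * |v - (s:ℝ)| ^ α) :=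
      le_ciInf inner
    have h3 : g v = ⨅ s : S, (f (r s) + H * |v - (s:ℝ)| ^ α) := rfl
    rw [← h3] at h2
    linarith
  have P1abs : ∀ u v : ℝ, |g u - g v| ≤ H * |u - v| ^ α := by
    intro u v
    rw [abs_sub_le_iff]
    constructor
    · linarith [P1 u v]
    · have := P1 v u
      rw [abs_sub_comm] at this
      linarith
  refine ⟨g, ?_, ?_⟩
  · intro u _ v _
    have : β * Real.log 2 / ((d:ℝ) * Real.log 3) = α := hαeq
    rw [this]
    exact P1abs u v
  · intro x hx
    have hmem : ΦK x ∈ S := ⟨x, hx, rfl⟩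
    have hgoal : (∑ p : Fin d, phiTrunc d K a (x p) / 3 ^ ((p : ℕ) + 1)) = ΦK x := rfl
    rw [hgoal]
    set s : ↥S := ⟨ΦK x, hmem⟩ with hs_def
    have hgs : g (ΦK x) = f (r s) := P2 s
    rw [hgs]
    -- digits of x and r s agree
    have hΦeq : ΦK (r s) = ΦK x := hre s
    have hagree : ∀ m, m < d * K → dig x m = dig (r s) m := by
      by_contra hcon
      exact (hdiff_imp x hx (r s) (hrc s) hcon).1 hΦeq.symm
    have hclose := (hagree_imp x hx (r s) (hrc s) hagree).2
    have hnrm : ‖x - r s‖ ≤ 1 / 2 ^ K := by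
      rw [pi_norm_le_iff_of_nonneg (by positivity)]
      intro p
      simpa [Real.norm_eq_abs] using hclose p
    have hfxy := hf x hx (r s) (hrc s)
    have key : Q * ‖x - r s‖ ^ β ≤ Q * 2 ^ (-(β * ((K : ℝ) - 4))) := by
      have h1 : ‖x - r s‖ ^ β ≤ ((1:ℝ) / 2 ^ K) ^ β :=
        Real.rpow_le_rpow (norm_nonneg _) hnrm hβ0.le
      have h2 : ((1:ℝ) / 2 ^ K) ^ β = 2 ^ (-(β * (K:ℝ))) := by
        rw [one_div, ← Real.rpow_natCast (2:ℝ) K, ← Real.rpow_neg (by norm_num),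
            ← Real.rpow_mul (by norm_num)]
        congr 1; ring
      have h3 : (2:ℝ) ^ (-(β * (K:ℝ))) ≤ 2 ^ (-(β * ((K:ℝ) - 4))) := by
        apply Real.rpow_le_rpow_of_exponent_le (by norm_num)
        nlinarith
      calc Q * ‖x - r s‖ ^ β ≤ Q * ((1:ℝ)/2^K) ^ β := mul_le_mul_of_nonneg_left h1 hQ.le
        _ = Q * 2 ^ (-(β*(K:ℝ))) := by rw [h2]
        _ ≤ Q * 2 ^ (-(β * ((K:ℝ) - 4))) := mul_le_mul_of_nonneg_left h3 hQ.le
    calc |f x - f (r s)| ≤ Q * ‖x - r s‖ ^ β := hfxy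
      _ ≤ Q * 2 ^ (-(β * ((K : ℝ) - 4))) := key

end
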